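/- Let K ≥ 1, let w₁, …, w_K be positive real numbers summing to 1, let σ₁, …, σ_K be positive real numbers, let ε′ > 0, and set σ̄ = Σ_{k=1}^K w_k σ_k². Then the equation Σ_{k=1}^K w_k √(ε′⁴ + 4σ_k² S) = ε′² + 2S has a solution S > 0 if and only if ε′² < σ̄. -/

import Mathlib

/-- Lower bound for square roots: `a + b/(2a) - b²/(8a³) ≤ √(a² + b)`. -/
lemma sqrt_lower_bound (a b : ℝ) (ha : 0 < a) (hb : 0 ≤ b) :
    a + b / (2 * a) - b ^ 2 / (8 * a ^ 3) ≤ Real.sqrt (a ^ 2 + b) := by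
  set s := Real.sqrt (a ^ 2 + b) with hs_def
  have hs0 : 0 ≤ s := Real.sqrt_nonneg _
  have hs : s ^ 2 = a ^ 2 + b := Real.sq_sqrt (by positivity)
  have hsa : a ≤ s := by nlinarith
  have hb' : b = s ^ 2 - a ^ 2 := by linarith
  have hid : 8 * a ^ 3 * s - (8 * a ^ 4 + 4 * a ^ 2 * b - b ^ 2)
      = (s - a) ^ 3 * (s + 3 * a) := by rw [hb']; ring
  have key : 8 * a ^ 4 + 4 * a ^ 2 * b - b ^ 2 ≤ 8 * a ^ 3 * s := by
    nlinarith [mul_nonneg (pow_nonneg (sub_nonneg.2 hsa) 3)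
      (by linarith : (0:ℝ) ≤ s + 3 * a)]
  have h8 : (0:ℝ) < 8 * a ^ 3 := by positivity
  rw [show a + b / (2 * a) - b ^ 2 / (8 * a ^ 3)
      = (8 * a ^ 4 + 4 * a ^ 2 * b - b ^ 2) / (8 * a ^ 3) by field_simp; ring]
  rw [div_le_iff₀ h8]
  nlinarith [key]

/-- With `K ≥ 1`, positive weights `w` summing to 1, positive `σ_k`, `ε' > 0`
and `σ̄ = Σ_k w_k σ_k²`, the equation `Σ_k w_k √(ε'⁴ + 4 σ_k² S) = ε'² + 2 S` has a
solution `S > 0` if and only if `ε'² < σ̄`. -/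
theorem fixed_point_product_has_positive_solution_iff
    (K : ℕ) (hK : 1 ≤ K) (w σ : Fin K → ℝ)
    (hw : ∀ k, 0 < w k) (hwsum : ∑ k, w k = 1) (hσ : ∀ k, 0 < σ k)
    (ε' : ℝ) (hε' : 0 < ε') (σbar : ℝ) (hσbar : σbar = ∑ k, w k * σ k ^ 2) :
    (∃ S : ℝ, 0 < S ∧
        ∑ k, w k * Real.sqrt (ε' ^ 4 + 4 * σ k ^ 2 * S) = ε' ^ 2 + 2 * S)
      ↔ ε' ^ 2 < σbar := by
  have hne : (Finset.univ : Finset (Fin K)).Nonempty := by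
    have : Nonempty (Fin K) := ⟨⟨0, hK⟩⟩
    exact Finset.univ_nonempty
  have hε2 : 0 < ε' ^ 2 := pow_pos hε' 2
  have hε4 : 0 < ε' ^ 4 := pow_pos hε' 4
  have hε6 : 0 < ε' ^ 6 := pow_pos hε' 6
  constructor
  · rintro ⟨S, hS, heq⟩
    -- strict upper bound per term
    have hlt : ∑ k, w k * Real.sqrt (ε' ^ 4 + 4 * σ k ^ 2 * S)
        < ∑ k, w k * (ε' ^ 2 + 2 * σ k ^ 2 * S / ε' ^ 2) := by
      apply Finset.sum_lt_sum_of_nonempty hne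
      intro k _
      apply mul_lt_mul_of_pos_left _ (hw k)
      have hk2 : 0 < σ k ^ 2 := pow_pos (hσ k) 2
      have hy : 0 < ε' ^ 2 + 2 * σ k ^ 2 * S / ε' ^ 2 := by
        have : 0 < 2 * σ k ^ 2 * S / ε' ^ 2 :=
          div_pos (by positivity) hε2
        linarith
      rw [Real.sqrt_lt' hy]
      have h1 : (ε' ^ 2 + 2 * σ k ^ 2 * S / ε' ^ 2) ^ 2
          = ε' ^ 4 + 4 * σ k ^ 2 * S + 4 * σ k ^ 4 * S ^ 2 / ε' ^ 4 := by
        field_simp; ring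
      have h2 : 0 < 4 * σ k ^ 4 * S ^ 2 / ε' ^ 4 :=
        div_pos (by have := pow_pos (hσ k) 4; have := pow_pos hS 2; positivity) hε4
      linarith
    have hsum2 : ∑ k, w k * (ε' ^ 2 + 2 * σ k ^ 2 * S / ε' ^ 2)
        = (∑ k, w k) * ε' ^ 2 + 2 * S / ε' ^ 2 * ∑ k, w k * σ k ^ 2 := by
      rw [Finset.sum_mul, Finset.mul_sum, ← Finset.sum_add_distrib]
      exact Finset.sum_congr rfl fun k _ => by ring
    rw [hwsum, one_mul, ← hσbar] at hsum2
    rw [heq, hsum2] at hlt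
    have hkey : 2 * S < 2 * S / ε' ^ 2 * σbar := by linarith
    by_contra h
    push_neg at h
    have h2 : 2 * S / ε' ^ 2 * σbar ≤ 2 * S / ε' ^ 2 * ε' ^ 2 := by
      apply mul_le_mul_of_nonneg_left h
      exact div_nonneg (by linarith) (le_of_lt hε2)
    rw [div_mul_cancel₀ _ (ne_of_gt hε2)] at h2
    linarith
  · intro hlt
    set W : ℝ := ∑ k, w k * σ k with hW
    set M : ℝ := ∑ k, w k * σ k ^ 4 with hM
    have hWpos : 0 < W := Finset.sum_pos (fun k _ => mul_pos (hw k) (hσ k)) hne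
    have hMpos : 0 < M :=
      Finset.sum_pos (fun k _ => mul_pos (hw k) (pow_pos (hσ k) 4)) hne
    set g : ℝ → ℝ := fun S => (∑ k, w k * Real.sqrt (ε' ^ 4 + 4 * σ k ^ 2 * S))
        - (ε' ^ 2 + 2 * S) with hg
    set S₁ : ℝ := ε' ^ 4 * (σbar - ε' ^ 2) / (2 * M) with hS₁
    set S₀ : ℝ := max S₁ ((W + 1) ^ 2) + 1 with hS₀
    have hS₁pos : 0 < S₁ :=
      div_pos (mul_pos hε4 (by linarith)) (by linarith)
    have hS₁S₀ : S₁ < S₀ := by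
      have := le_max_left S₁ ((W + 1) ^ 2); linarith
    have hS₀pos : 0 < S₀ := lt_trans hS₁pos hS₁S₀
    -- g S₁ > 0
    have hg1 : 0 < g S₁ := by
      have hlow : ∀ k : Fin K,
          ε' ^ 2 + 2 * σ k ^ 2 * S₁ / ε' ^ 2 - 2 * σ k ^ 4 * S₁ ^ 2 / ε' ^ 6
            ≤ Real.sqrt (ε' ^ 4 + 4 * σ k ^ 2 * S₁) := by
        intro k
        have hb : (0:ℝ) ≤ 4 * σ k ^ 2 * S₁ := by positivity
        have h := sqrt_lower_bound (ε' ^ 2) (4 * σ k ^ 2 * S₁) hε2 hb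
        have e1 : (ε' ^ 2) ^ 2 + 4 * σ k ^ 2 * S₁ = ε' ^ 4 + 4 * σ k ^ 2 * S₁ := by
          ring
        rw [e1] at h
        have e2 : ε' ^ 2 + 4 * σ k ^ 2 * S₁ / (2 * ε' ^ 2)
            - (4 * σ k ^ 2 * S₁) ^ 2 / (8 * (ε' ^ 2) ^ 3)
            = ε' ^ 2 + 2 * σ k ^ 2 * S₁ / ε' ^ 2 - 2 * σ k ^ 4 * S₁ ^ 2 / ε' ^ 6 := by
          field_simp; ring
        linarith [e2 ▸ h]
      have hsum : ∑ k, w k * (ε' ^ 2 + 2 * σ k ^ 2 * S₁ / ε' ^ 2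
            - 2 * σ k ^ 4 * S₁ ^ 2 / ε' ^ 6)
          ≤ ∑ k, w k * Real.sqrt (ε' ^ 4 + 4 * σ k ^ 2 * S₁) :=
        Finset.sum_le_sum fun k _ =>
          mul_le_mul_of_nonneg_left (hlow k) (le_of_lt (hw k))
      have hsum2 : ∑ k, w k * (ε' ^ 2 + 2 * σ k ^ 2 * S₁ / ε' ^ 2
            - 2 * σ k ^ 4 * S₁ ^ 2 / ε' ^ 6)
          = (∑ k, w k) * ε' ^ 2 + 2 * S₁ / ε' ^ 2 * (∑ k, w k * σ k ^ 2)
            - 2 * S₁ ^ 2 / ε' ^ 6 * M := by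
        rw [hM, Finset.sum_mul, Finset.mul_sum, Finset.mul_sum,
          ← Finset.sum_add_distrib, ← Finset.sum_sub_distrib]
        exact Finset.sum_congr rfl fun k _ => by ring
      rw [hwsum, one_mul, ← hσbar] at hsum2
      have hS₁M : S₁ * M = ε' ^ 4 * (σbar - ε' ^ 2) / 2 := by
        rw [hS₁]; field_simp
      have e3 : 2 * S₁ ^ 2 / ε' ^ 6 * M = S₁ * (σbar - ε' ^ 2) / ε' ^ 2 := by
        rw [show 2 * S₁ ^ 2 / ε' ^ 6 * M = 2 * (S₁ * M) * S₁ / ε' ^ 6 by ring, hS₁M]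
        field_simp
      have e4 : ε' ^ 2 + 2 * S₁ / ε' ^ 2 * σbar - S₁ * (σbar - ε' ^ 2) / ε' ^ 2
          - (ε' ^ 2 + 2 * S₁) = S₁ * (σbar - ε' ^ 2) / ε' ^ 2 := by
        field_simp; ring
      have e5 : 0 < S₁ * (σbar - ε' ^ 2) / ε' ^ 2 :=
        div_pos (mul_pos hS₁pos (by linarith)) hε2
      simp only [hg]
      rw [e3] at hsum2
      linarith
    -- g S₀ < 0
    have hg0 : g S₀ < 0 := by
      have hr0 : 0 ≤ Real.sqrt S₀ := Real.sqrt_nonneg _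
      have hr : (Real.sqrt S₀) ^ 2 = S₀ := Real.sq_sqrt (le_of_lt hS₀pos)
      have hup : ∀ k : Fin K,
          Real.sqrt (ε' ^ 4 + 4 * σ k ^ 2 * S₀) ≤ ε' ^ 2 + 2 * σ k * Real.sqrt S₀ := by
        intro k
        have hσr : 0 ≤ σ k * Real.sqrt S₀ := mul_nonneg (le_of_lt (hσ k)) hr0
        have h1 : ε' ^ 4 + 4 * σ k ^ 2 * S₀ ≤ (ε' ^ 2 + 2 * σ k * Real.sqrt S₀) ^ 2 := by
          nlinarith
        calc Real.sqrt (ε' ^ 4 + 4 * σ k ^ 2 * S₀)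
            ≤ Real.sqrt ((ε' ^ 2 + 2 * σ k * Real.sqrt S₀) ^ 2) := Real.sqrt_le_sqrt h1
          _ = ε' ^ 2 + 2 * σ k * Real.sqrt S₀ := Real.sqrt_sq (by nlinarith)
      have hsum : ∑ k, w k * Real.sqrt (ε' ^ 4 + 4 * σ k ^ 2 * S₀)
          ≤ ∑ k, w k * (ε' ^ 2 + 2 * σ k * Real.sqrt S₀) :=
        Finset.sum_le_sum fun k _ =>
          mul_le_mul_of_nonneg_left (hup k) (le_of_lt (hw k))
      have hsum2 : ∑ k, w k * (ε' ^ 2 + 2 * σ k * Real.sqrt S₀)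
          = (∑ k, w k) * ε' ^ 2 + 2 * Real.sqrt S₀ * W := by
        rw [hW, Finset.sum_mul, Finset.mul_sum, ← Finset.sum_add_distrib]
        exact Finset.sum_congr rfl fun k _ => by ring
      rw [hwsum, one_mul] at hsum2
      have hrW : W + 1 ≤ Real.sqrt S₀ := by
        have h1 : (W + 1) ^ 2 ≤ S₀ := by
          have := le_max_right S₁ ((W + 1) ^ 2); linarith
        calc W + 1 = Real.sqrt ((W + 1) ^ 2) := (Real.sqrt_sq (by linarith)).symm
          _ ≤ Real.sqrt S₀ := Real.sqrt_le_sqrt h1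
      have hneg : 2 * Real.sqrt S₀ * W - 2 * S₀ < 0 := by nlinarith
      simp only [hg]
      linarith
    -- IVT
    have hcont : Continuous g := by
      apply Continuous.sub
      · apply continuous_finset_sum
        intro k _
        exact continuous_const.mul (Real.continuous_sqrt.comp
          (continuous_const.add (continuous_const.mul continuous_id)))
      · exact continuous_const.add (continuous_const.mul continuous_id)
    have hmem : (0:ℝ) ∈ Set.Icc (g S₀) (g S₁) := ⟨le_of_lt hg0, le_of_lt hg1⟩
    obtain ⟨S, hSmem, hgS⟩ := intermediate_value_Icc' (le_of_lt hS₁S₀)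
      hcont.continuousOn hmem
    refine ⟨S, lt_of_lt_of_le hS₁pos hSmem.1, ?_⟩
    simp only [hg] at hgS
    linarith [hgS]
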